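/- (Sufficiency in the model with category-specific sender and receiver effects.) Fix β ∈ ℝ^k, covariate vectors x₁₁, x₁₂, x₂₁, x₂₂ ∈ ℝ^k, sender effects λ₁, λ₂ ∈ ℝ and receiver effects δ₁, δ₂ ∈ ℝ. Let D₁₁, D₁₂, D₂₁, D₂₂ be mutually independent random variables valued in {0,1} with P(D_{rs} = 1) = Λ(⟨x_{rs}, β⟩ − λ_r − δ_s) for r,s ∈ {1,2}, and set Z = ((D₁₁ − D₁₂) − (D₂₁ − D₂₂))/2 and r = (x₁₁ − x₁₂) − (x₂₁ − x₂₂). Then P(Z = 1 | Z ∈ {−1, +1}) = Λ(⟨r, β⟩); in particular this conditional probability does not depend on λ₁, λ₂, δ₁, δ₂. -/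

import Mathlib

open MeasureTheory ProbabilityTheory
open scoped RealInnerProductSpace

noncomputable def logistic (z : ℝ) : ℝ := Real.exp z / (1 + Real.exp z)

lemma logistic_pos (t : ℝ) : 0 < logistic t := by unfold logistic; positivity

lemma one_sub_logistic_pos (t : ℝ) : 0 < 1 - logistic t := by
  unfold logistic
  have h : (0:ℝ) < 1 + Real.exp t := by positivity
  rw [sub_pos, div_lt_one h]; linarith

lemma ofReal_mul4 {p q u v : ℝ} (hp : 0 ≤ p) (hq : 0 ≤ q) (hu : 0 ≤ u) :
    ENNReal.ofReal p * ENNReal.ofReal q * (ENNReal.ofReal u * ENNReal.ofReal v)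
      = ENNReal.ofReal (p * q * u * v) := by
  rw [← ENNReal.ofReal_mul hp, ← ENNReal.ofReal_mul hu,
    ← ENNReal.ofReal_mul (mul_nonneg hp hq), ← mul_assoc]

lemma key (a b c d : ℝ) :
    logistic a * (1 - logistic b) * (1 - logistic c) * logistic d /
      (logistic a * (1 - logistic b) * (1 - logistic c) * logistic d
        + (1 - logistic a) * logistic b * logistic c * (1 - logistic d))
    = logistic (a + d - b - c) := by
  have e1 : logistic a * (1 - logistic b) * (1 - logistic c) * logistic d
      = Real.exp a * Real.exp d /
        ((1 + Real.exp a) * (1 + Real.exp b) * (1 + Real.exp c) * (1 + Real.exp d)) := by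
    unfold logistic
    have h : ∀ t : ℝ, (0:ℝ) < 1 + Real.exp t := fun t => by positivity
    field_simp
    ring
  have e2 : (1 - logistic a) * logistic b * logistic c * (1 - logistic d)
      = Real.exp b * Real.exp c /
        ((1 + Real.exp a) * (1 + Real.exp b) * (1 + Real.exp c) * (1 + Real.exp d)) := by
    unfold logistic
    have h : ∀ t : ℝ, (0:ℝ) < 1 + Real.exp t := fun t => by positivity
    field_simp
    ring
  rw [e1, e2, ← add_div]
  unfold logistic
  rw [Real.exp_sub, Real.exp_sub, Real.exp_add]
  have h1 : ((1 + Real.exp a) * (1 + Real.exp b) * (1 + Real.exp c) * (1 + Real.exp d)) ≠ 0 := by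
    positivity
  have h2 : Real.exp a * Real.exp d + Real.exp b * Real.exp c ≠ 0 := by positivity
  have h3 : Real.exp b * Real.exp c ≠ 0 := by positivity
  have h4 : 1 + Real.exp a * Real.exp d / Real.exp b / Real.exp c ≠ 0 := by positivity
  field_simp
  ring

/-- Sufficiency in the ordered-logit network model with category-specific
sender effects `lam` and receiver effects `δ`, at a common cutoff. -/
theorem sufficiency_sender_receiver_effects
    {Ω : Type*} [MeasurableSpace Ω] (P : Measure Ω) [IsProbabilityMeasure P]
    (k : ℕ) (β : EuclideanSpace ℝ (Fin k))
    (x : Fin 2 → Fin 2 → EuclideanSpace ℝ (Fin k))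
    (lam : Fin 2 → ℝ) (δ : Fin 2 → ℝ)
    (D : Fin 2 → Fin 2 → Ω → ℝ)
    (hmeas : ∀ r s, Measurable (D r s))
    (hval : ∀ r s ω, D r s ω = 0 ∨ D r s ω = 1)
    (hindep : iIndepFun
      (fun p : Fin 2 × Fin 2 => D p.1 p.2) P)
    (hprob : ∀ r s, P {ω | D r s ω = 1}
      = ENNReal.ofReal (logistic (⟪x r s, β⟫ - lam r - δ s)))
    (Z : Ω → ℝ)
    (hZ : ∀ ω, Z ω = ((D 0 0 ω - D 0 1 ω) - (D 1 0 ω - D 1 1 ω)) / 2)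
    (r : EuclideanSpace ℝ (Fin k))
    (hr : r = (x 0 0 - x 0 1) - (x 1 0 - x 1 1)) :
    P[|{ω | Z ω = 1 ∨ Z ω = -1}] {ω | Z ω = 1}
      = ENNReal.ofReal (logistic ⟪r, β⟫) := by
  classical
  set a : Fin 2 → Fin 2 → ℝ := fun i j => ⟪x i j, β⟫ - lam i - δ j with ha
  have hset1 : ∀ i j : Fin 2, D i j ⁻¹' {1} = {ω | D i j ω = 1} := by
    intro i j; ext ω; simp
  have hp1 : ∀ i j : Fin 2, P (D i j ⁻¹' {1}) = ENNReal.ofReal (logistic (a i j)) := by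
    intro i j; rw [hset1]; exact hprob i j
  have hp0 : ∀ i j : Fin 2, P (D i j ⁻¹' {0}) = ENNReal.ofReal (1 - logistic (a i j)) := by
    intro i j
    have hc : D i j ⁻¹' {0} = (D i j ⁻¹' {1})ᶜ := by
      ext ω
      rcases hval i j ω with h | h <;> simp [h]
    rw [hc, prob_compl_eq_one_sub ((hmeas i j) (measurableSet_singleton 1)), hp1,
      ← ENNReal.ofReal_one, ← ENNReal.ofReal_sub _ (logistic_pos (a i j)).le]
  set v1 : Fin 2 × Fin 2 → ℝ := fun p => if p.1 = p.2 then 1 else 0 with hv1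
  set v2 : Fin 2 × Fin 2 → ℝ := fun p => if p.1 = p.2 then 0 else 1 with hv2
  have hiff1 : ∀ ω, Z ω = 1 ↔ ∀ p : Fin 2 × Fin 2, D p.1 p.2 ω = v1 p := by
    intro ω
    constructor
    · intro h
      have he : D 0 0 ω - D 0 1 ω - (D 1 0 ω - D 1 1 ω) = 2 := by
        have h2 := hZ ω; rw [h] at h2; linarith
      intro p
      fin_cases p <;>
        rcases hval 0 0 ω with h00 | h00 <;> rcases hval 0 1 ω with h01 | h01 <;>
        rcases hval 1 0 ω with h10 | h10 <;> rcases hval 1 1 ω with h11 | h11 <;>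
        simp [hv1, h00, h01, h10, h11] <;> linarith
    · intro h
      rw [hZ ω, h (0,0), h (0,1), h (1,0), h (1,1)]
      norm_num [hv1]
  have hiff2 : ∀ ω, Z ω = -1 ↔ ∀ p : Fin 2 × Fin 2, D p.1 p.2 ω = v2 p := by
    intro ω
    constructor
    · intro h
      have he : D 0 0 ω - D 0 1 ω - (D 1 0 ω - D 1 1 ω) = -2 := by
        have h2 := hZ ω; rw [h] at h2; linarith
      intro p
      fin_cases p <;>
        rcases hval 0 0 ω with h00 | h00 <;> rcases hval 0 1 ω with h01 | h01 <;>
        rcases hval 1 0 ω with h10 | h10 <;> rcases hval 1 1 ω with h11 | h11 <;>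
        simp [hv2, h00, h01, h10, h11] <;> linarith
    · intro h
      rw [hZ ω, h (0,0), h (0,1), h (1,0), h (1,1)]
      norm_num [hv2]
  have hE1 : {ω | Z ω = 1}
      = ⋂ p ∈ (Finset.univ : Finset (Fin 2 × Fin 2)),
          (fun q : Fin 2 × Fin 2 => D q.1 q.2) p ⁻¹' {v1 p} := by
    ext ω; simp [hiff1 ω]
  have hE2 : {ω | Z ω = -1}
      = ⋂ p ∈ (Finset.univ : Finset (Fin 2 × Fin 2)),
          (fun q : Fin 2 × Fin 2 => D q.1 q.2) p ⁻¹' {v2 p} := by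
    ext ω; simp [hiff2 ω]
  set q1 : ℝ := logistic (a 0 0) * (1 - logistic (a 0 1)) * (1 - logistic (a 1 0))
      * logistic (a 1 1) with hq1
  set q2 : ℝ := (1 - logistic (a 0 0)) * logistic (a 0 1) * logistic (a 1 0)
      * (1 - logistic (a 1 1)) with hq2
  have hq1pos : 0 < q1 := by
    rw [hq1]
    have := logistic_pos (a 0 0); have := logistic_pos (a 1 1)
    have := one_sub_logistic_pos (a 0 1); have := one_sub_logistic_pos (a 1 0)
    positivity
  have hq2pos : 0 < q2 := by
    rw [hq2]
    have := logistic_pos (a 0 1); have := logistic_pos (a 1 0)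
    have := one_sub_logistic_pos (a 0 0); have := one_sub_logistic_pos (a 1 1)
    positivity
  have hm1 : P {ω | Z ω = 1} = ENNReal.ofReal q1 := by
    rw [hE1, hindep.measure_inter_preimage_eq_mul Finset.univ
      (fun p _ => measurableSet_singleton (v1 p))]
    rw [Fintype.prod_prod_type]
    simp only [Fin.prod_univ_two]
    norm_num [hv1, hp0, hp1]
    exact ofReal_mul4 (logistic_pos _).le (one_sub_logistic_pos _).le (one_sub_logistic_pos _).le
  have hm2 : P {ω | Z ω = -1} = ENNReal.ofReal q2 := by
    rw [hE2, hindep.measure_inter_preimage_eq_mul Finset.univ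
      (fun p _ => measurableSet_singleton (v2 p))]
    rw [Fintype.prod_prod_type]
    simp only [Fin.prod_univ_two]
    norm_num [hv2, hp0, hp1]
    exact ofReal_mul4 (one_sub_logistic_pos _).le (logistic_pos _).le (logistic_pos _).le
  -- measurability
  have hZm : Measurable Z := by
    have : Z = fun ω => ((D 0 0 ω - D 0 1 ω) - (D 1 0 ω - D 1 1 ω)) / 2 := funext hZ
    rw [this]
    exact (((((hmeas 0 0).sub (hmeas 0 1)).sub ((hmeas 1 0).sub (hmeas 1 1)))).div_const 2)
  have hms1 : MeasurableSet {ω | Z ω = 1} := hZm (measurableSet_singleton 1)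
  have hms2 : MeasurableSet {ω | Z ω = -1} := hZm (measurableSet_singleton (-1))
  have hsu : {ω | Z ω = 1 ∨ Z ω = -1} = {ω | Z ω = 1} ∪ {ω | Z ω = -1} := by
    ext ω; simp [Set.mem_union]
  have hdisj : Disjoint {ω | Z ω = 1} {ω | Z ω = -1} := by
    rw [Set.disjoint_left]
    intro ω h1 h2
    simp only [Set.mem_setOf_eq] at h1 h2
    linarith
  have hPs : P {ω | Z ω = 1 ∨ Z ω = -1} = ENNReal.ofReal (q1 + q2) := by
    rw [hsu, measure_union hdisj hms2, hm1, hm2, ENNReal.ofReal_add hq1pos.le hq2pos.le]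
  have hsub : {ω | Z ω = 1} ⊆ {ω | Z ω = 1 ∨ Z ω = -1} := fun ω h => Or.inl h
  rw [cond_apply (by rw [hsu]; exact hms1.union hms2) P,
    Set.inter_eq_self_of_subset_right hsub, hPs, hm1,
    ← ENNReal.ofReal_inv_of_pos (by positivity),
    ← ENNReal.ofReal_mul (by positivity)]
  congr 1
  have hinner : a 0 0 + a 1 1 - a 0 1 - a 1 0 = ⟪r, β⟫ := by
    simp only [ha, hr, inner_sub_left]
    ring
  rw [inv_mul_eq_div, ← hinner, hq1, hq2]
  exact key (a 0 0) (a 0 1) (a 1 0) (a 1 1)
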